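/- Let b > 0, k > 1 real, and a, c real satisfying 32a(1−2k)b⁴ + 8(a³ − 2c(k−1)(3+2k))b³ + 12a²c(1+k)b² − 2ac²(1 − 3k(2+k))b + c³(k²−1)(k+3) = 0. Then f₂(r) = 1 + ((2ab + (k−1)c)/(2b(k−1))) r + ((16b³(1−k) + 4b²a² + 4kcba + c²(k²−1))/(8b²k(k−1))) r² solves r f'' + (−2b r² − (c/b) r + k − 1) f' + (4b r − a + (1−k)c/(2b)) f = 0 identically. -/

import Mathlib

theorem stmt_13 (b a c k : ℝ) (hb : 0 < b) (hk : 1 < k)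
    (hcond : 32 * a * (1 - 2 * k) * b ^ 4 +
        8 * (a ^ 3 - 2 * c * (k - 1) * (3 + 2 * k)) * b ^ 3 +
        12 * a ^ 2 * c * (1 + k) * b ^ 2 -
        2 * a * c ^ 2 * (1 - 3 * k * (2 + k)) * b +
        c ^ 3 * (k ^ 2 - 1) * (k + 3) = 0)
    (f : ℝ → ℝ)
    (hf : f = fun r : ℝ =>
      1 + ((2 * a * b + (k - 1) * c) / (2 * b * (k - 1))) * r +
        ((16 * b ^ 3 * (1 - k) + 4 * b ^ 2 * a ^ 2 + 4 * k * c * b * a +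
            c ^ 2 * (k ^ 2 - 1)) / (8 * b ^ 2 * k * (k - 1))) * r ^ 2) :
    ∀ r : ℝ,
      r * deriv (deriv f) r +
        (-2 * b * r ^ 2 - (c / b) * r + k - 1) * deriv f r +
        (4 * b * r - a + (1 - k) * c / (2 * b)) * f r = 0 := by
  set A : ℝ := (2 * a * b + (k - 1) * c) / (2 * b * (k - 1)) with hA
  set B : ℝ := (16 * b ^ 3 * (1 - k) + 4 * b ^ 2 * a ^ 2 + 4 * k * c * b * a +
      c ^ 2 * (k ^ 2 - 1)) / (8 * b ^ 2 * k * (k - 1)) with hB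
  have hd1 : deriv f = fun r : ℝ => A + B * (2 * r) := by
    funext r
    rw [hf]
    have h : HasDerivAt (fun r : ℝ => 1 + A * r + B * r ^ 2) (A + B * (2 * r)) r := by
      have h1 : HasDerivAt (fun r : ℝ => 1 + A * r) A r := by
        simpa using ((hasDerivAt_id r).const_mul A).const_add 1
      have h2 : HasDerivAt (fun r : ℝ => B * r ^ 2) (B * (2 * r)) r := by
        simpa using (hasDerivAt_pow 2 r).const_mul B
      exact h1.add h2
    exact h.deriv
  have hd2 : deriv (deriv f) = fun _ : ℝ => B * 2 := by
    rw [hd1]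
    funext r
    have h : HasDerivAt (fun r : ℝ => A + B * (2 * r)) (B * 2) r := by
      simpa using (((hasDerivAt_id r).const_mul (2:ℝ)).const_mul B).const_add A
    exact h.deriv
  intro r
  rw [hd2, hd1, hf]
  simp only
  rw [hA, hB]
  have hb' : b ≠ 0 := ne_of_gt hb
  have hk1 : k - 1 ≠ 0 := by nlinarith
  have hk0 : k ≠ 0 := by nlinarith
  field_simp
  linear_combination (-2 * r ^ 2) * hcond
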